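/- Let {μ_y : y ∈ Y} be a σ-finite disintegration of μ with respect to (ν, φ) that is uniformly σ-finite. Then the map (y, K) ↦ μ_y(K) from Y × K(X) to [0, ∞] is Borel measurable. -/

import Mathlib

open MeasureTheory TopologicalSpace Metric Set ProbabilityTheory

/-- If `{μy y}` is a uniformly σ-finite disintegration of `μ` with respect to `(ν, φ)`,
then the map `(y, K) ↦ μy y K` from `Y × K(X)` to `[0, ∞]` is Borel measurable, where
`K(X)` is the hyperspace of (nonempty) compact subsets of `X` with the Vietoris
(Hausdorff metric) topology. -/
theorem measurable_of_uniformly_sigmaFinite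
    {X Y : Type*} [MetricSpace X] [PolishSpace X]
    [MeasurableSpace X] [BorelSpace X]
    [MeasurableSpace Y] [StandardBorelSpace Y]
    [MeasurableSpace (NonemptyCompacts X)] [BorelSpace (NonemptyCompacts X)]
    (φ : X → Y) (hφ : Measurable φ)
    (μ : Measure X) (ν : Measure Y) (μy : Y → Measure X)
    (hmeas : ∀ B : Set X, MeasurableSet B → Measurable fun y => μy y B)
    (hconc : ∀ y : Y, μy y ((φ ⁻¹' {y})ᶜ) = 0)
    (hint : ∀ B : Set X, MeasurableSet B → μ B = ∫⁻ y, μy y B ∂ν)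
    (hsf : ∀ y : Y, SigmaFinite (μy y))
    (B : ℕ → Set X) (hB : ∀ n, MeasurableSet (B n))
    (hBfin : ∀ n, ∀ y : Y, μy y (B n) < ⊤)
    (hBcover : ∀ y : Y, μy y ((⋃ n, B n)ᶜ) = 0) :
    Measurable fun p : Y × NonemptyCompacts X => μy p.1 (p.2 : Set X) := by
  classical
  set A : ℕ → Set X := Set.accumulate B with hA
  have hAmeas : ∀ n, MeasurableSet (A n) :=
    fun n => MeasurableSet.biUnion (Set.to_countable _) fun k _ => hB k
  have hAfin : ∀ n (y : Y), μy y (A n) < ⊤ := by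
    intro n y
    rw [hA, Set.accumulate_def]
    exact measure_biUnion_lt_top (Set.finite_Iic n) fun k _ => hBfin k y
  -- key measurability for fixed n and δ
  have key : ∀ (n : ℕ) (δ : ℝ), 0 < δ →
      Measurable fun p : Y × NonemptyCompacts X =>
        μy p.1 (thickening δ (p.2 : Set X) ∩ A n) := by
    intro n δ hδ
    set κ : Kernel (Y × NonemptyCompacts X) X :=
      { toFun := fun p => (μy p.1).restrict (A n)
        measurable' := by
          refine Measure.measurable_of_measurable_coe _ fun s hs => ?_
          simp_rw [Measure.restrict_apply hs]
          exact (hmeas _ (hs.inter (hAmeas n))).comp measurable_fst } with hκ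
    have hκapp : ∀ p, κ p = (μy p.1).restrict (A n) := fun p => rfl
    have hfin : ∀ p, IsFiniteMeasure (κ p) := fun p => ⟨by
      rw [hκapp, Measure.restrict_apply_univ]; exact hAfin n p.1⟩
    have hopen : IsOpen {r : X × NonemptyCompacts X | r.1 ∈ thickening δ (r.2 : Set X)} := by
      have hset : {r : X × NonemptyCompacts X | r.1 ∈ thickening δ (r.2 : Set X)}
          = {r : X × NonemptyCompacts X | infDist r.1 (r.2 : Set X) < δ} := by
        ext r
        exact mem_thickening_iff_infDist_lt r.2.nonempty
      rw [hset]
      exact isOpen_lt Metric.lipschitz_infDist.continuous continuous_const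
    have ht : MeasurableSet
        {q : (Y × NonemptyCompacts X) × X | q.2 ∈ thickening δ (q.1.2 : Set X)} := by
      have hpre : {q : (Y × NonemptyCompacts X) × X | q.2 ∈ thickening δ (q.1.2 : Set X)}
          = (fun q : (Y × NonemptyCompacts X) × X => (q.2, q.1.2)) ⁻¹'
            {r : X × NonemptyCompacts X | r.1 ∈ thickening δ (r.2 : Set X)} := rfl
      rw [hpre]
      exact hopen.measurableSet.preimage
        (measurable_snd.prodMk (measurable_snd.comp measurable_fst))
    have := Kernel.measurable_kernel_prodMk_left_of_finite ht hfin
    have heq : (fun p : Y × NonemptyCompacts X => μy p.1 (thickening δ (p.2 : Set X) ∩ A n))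
        = fun p => κ p (Prod.mk p ⁻¹'
            {q : (Y × NonemptyCompacts X) × X | q.2 ∈ thickening δ (q.1.2 : Set X)}) := by
      funext p
      have : Prod.mk p ⁻¹'
          {q : (Y × NonemptyCompacts X) × X | q.2 ∈ thickening δ (q.1.2 : Set X)}
          = thickening δ (p.2 : Set X) := rfl
      rw [this, hκapp, Measure.restrict_apply isOpen_thickening.measurableSet]
    rw [heq]
    exact this
  -- pointwise decomposition
  have heq : (fun p : Y × NonemptyCompacts X => μy p.1 (p.2 : Set X))
      = fun p => ⨆ n : ℕ, ⨅ j : ℕ,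
          μy p.1 (thickening (1 / ((j : ℝ) + 1)) (p.2 : Set X) ∩ A n) := by
    funext p
    obtain ⟨y, K⟩ := p
    dsimp only
    have hKn : (K : Set X).Nonempty := K.nonempty
    have hKc : IsClosed (K : Set X) := K.isCompact.isClosed
    -- step 1 : μy y K = μy y (K ∩ ⋃ B n)
    have h1 : μy y (K : Set X) = μy y ((K : Set X) ∩ ⋃ n, B n) := by
      refine le_antisymm ?_ (measure_mono inter_subset_left)
      calc μy y (K : Set X)
          ≤ μy y (((K : Set X) ∩ ⋃ n, B n) ∪ (⋃ n, B n)ᶜ) := by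
            refine measure_mono fun x hx => ?_
            by_cases hxB : x ∈ ⋃ n, B n
            · exact Or.inl ⟨hx, hxB⟩
            · exact Or.inr hxB
        _ ≤ μy y ((K : Set X) ∩ ⋃ n, B n) + μy y ((⋃ n, B n)ᶜ) := measure_union_le _ _
        _ = μy y ((K : Set X) ∩ ⋃ n, B n) := by rw [hBcover y, add_zero]
    -- step 2 : continuity from below
    have h2 : μy y ((K : Set X) ∩ ⋃ n, B n) = ⨆ n, μy y ((K : Set X) ∩ A n) := by
      have hmono : Monotone fun n => (K : Set X) ∩ A n :=
        fun i j hij => inter_subset_inter_right _ (Set.monotone_accumulate hij)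
      rw [← Monotone.measure_iUnion hmono, ← Set.inter_iUnion, hA, Set.iUnion_accumulate]
    -- step 3 : continuity from above via thickenings
    have h3 : ∀ n, μy y ((K : Set X) ∩ A n)
        = ⨅ j : ℕ, μy y (thickening (1 / ((j : ℝ) + 1)) (K : Set X) ∩ A n) := by
      intro n
      set s : ℕ → Set X := fun j => thickening (1 / ((j : ℝ) + 1)) (K : Set X) ∩ A n with hs
      have hanti : Antitone s := by
        intro i j hij
        refine inter_subset_inter_left _ (thickening_mono ?_ _)
        have : (i : ℝ) + 1 ≤ (j : ℝ) + 1 := by exact_mod_cast Nat.succ_le_succ hij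
        exact one_div_le_one_div_of_le (by positivity) this
      have hiInter : ⋂ j, s j = (K : Set X) ∩ A n := by
        have hth : ⋂ j : ℕ, thickening (1 / ((j : ℝ) + 1)) (K : Set X) = (K : Set X) := by
          refine Subset.antisymm ?_ (Set.subset_iInter fun j =>
            self_subset_thickening (by positivity) _)
          intro x hx
          simp only [Set.mem_iInter] at hx
          have hd : infDist x (K : Set X) ≤ 0 := by
            refine le_of_forall_pos_le_add fun ε hε => ?_
            obtain ⟨j, hj⟩ := exists_nat_one_div_lt hε
            have := (mem_thickening_iff_infDist_lt hKn).1 (hx j)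
            rw [zero_add]
            exact this.le.trans hj.le
          have hd0 : infDist x (K : Set X) = 0 :=
            le_antisymm hd (infDist_nonneg)
          have := (mem_closure_iff_infDist_zero hKn).2 hd0
          rwa [hKc.closure_eq] at this
        rw [hs]
        rw [← Set.iInter_inter, hth]
      have hnull : ∀ j, NullMeasurableSet (s j) (μy y) := fun j =>
        ((isOpen_thickening.measurableSet.inter (hAmeas n))).nullMeasurableSet
      have hfin : ∃ j, μy y (s j) ≠ ⊤ :=
        ⟨0, ((measure_mono inter_subset_right).trans_lt (hAfin n y)).ne⟩
      rw [← hiInter, Directed.measure_iInter hnull hanti.directed_ge hfin]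
    simp only [h1, h2]
    exact iSup_congr h3
  rw [heq]
  exact Measurable.iSup fun n => Measurable.iInf fun j => key n _ (by positivity)
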